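/- Let Z, η be independent random variables, h(z, ·) continuous and strictly increasing for each z, F_η the continuous strictly increasing CDF of η, and X = h(Z, η). Define V = F_{X|Z}(X | Z). Then V = F_η(η) almost surely; consequently V is Uniform[0,1] and V is independent of Z. -/

import Mathlib

open MeasureTheory ProbabilityTheory Set Filter Topology

/-- The control variable `V = F_{X∣Z}(X ∣ Z)` equals `F_η(η)` a.s., is `Uniform[0,1]`,
and is independent of the instrument `Z`. -/
theorem control_variable_uniform_indep
    {Ω : Type*} [MeasurableSpace Ω] (P : Measure Ω) [IsProbabilityMeasure P]
    (Z η : Ω → ℝ) (hZ : Measurable Z) (hη : Measurable η)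
    (hindep : IndepFun Z η P)
    (h : ℝ → ℝ → ℝ) (hmeas : Measurable (Function.uncurry h))
    (hmono : ∀ z, StrictMono (h z)) (hcont : ∀ z, Continuous (h z))
    (Fη : ℝ → ℝ) (hF : ∀ t, Fη t = (P {ω | η ω ≤ t}).toReal)
    (hFcont : Continuous Fη) (hFmono : StrictMono Fη)
    (X : Ω → ℝ) (hX : X = fun ω => h (Z ω) (η ω))
    (V : Ω → ℝ)
    (hV : V = fun ω => (condDistrib X Z P (Z ω) (Set.Iic (X ω))).toReal) :
    (V =ᵐ[P] fun ω => Fη (η ω)) ∧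
      P.map V = volume.restrict (Set.Icc (0:ℝ) 1) ∧
      IndepFun V Z P := by
  have hmeas_h : ∀ z, Measurable (h z) := fun z => (hcont z).measurable
  have hXmeas : Measurable X := by
    rw [hX]; exact hmeas.comp (hZ.prodMk hη)
  have hμη : IsProbabilityMeasure (P.map η) := Measure.isProbabilityMeasure_map hη.aemeasurable
  have hμZ : IsProbabilityMeasure (P.map Z) := Measure.isProbabilityMeasure_map hZ.aemeasurable
  -- the kernel z ↦ law of h z ∘ η
  let κ : Kernel ℝ ℝ :=
    { toFun := fun z => (P.map η).map (h z)
      measurable' := by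
        refine Measure.measurable_of_measurable_coe _ (fun s hs => ?_)
        have : ∀ z, (P.map η).map (h z) s = (P.map η) (Prod.mk z ⁻¹' (Function.uncurry h ⁻¹' s)) := by
          intro z
          rw [Measure.map_apply (hmeas_h z) hs]
          rfl
        simp_rw [this]
        exact measurable_measure_prodMk_left (hmeas hs) }
  have hκapp : ∀ z, κ z = (P.map η).map (h z) := fun _ => rfl
  have hκmarkov : IsMarkovKernel κ := by
    constructor; intro z
    rw [hκapp]
    exact Measure.isProbabilityMeasure_map (hmeas_h z).aemeasurable
  -- P.map (Z, X) = (P.map Z) ⊗ₘ κ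
  have hprod : P.map (fun ω => (Z ω, η ω)) = (P.map Z).prod (P.map η) :=
    (indepFun_iff_map_prod_eq_prod_map_map hZ.aemeasurable hη.aemeasurable).mp hindep
  have hφ : Measurable (fun p : ℝ × ℝ => (p.1, h p.1 p.2)) :=
    measurable_fst.prodMk hmeas
  have hkey : P.map (fun ω => (Z ω, X ω)) = (P.map Z) ⊗ₘ κ := by
    have h1 : P.map (fun ω => (Z ω, X ω))
        = ((P.map Z).prod (P.map η)).map (fun p : ℝ × ℝ => (p.1, h p.1 p.2)) := by
      rw [← hprod, Measure.map_map hφ (hZ.prodMk hη), hX]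
      rfl
    rw [h1]
    ext s hs
    rw [Measure.map_apply hφ hs, Measure.prod_apply (hφ hs),
      Measure.compProd_apply hs]
    refine lintegral_congr (fun z => ?_)
    rw [hκapp, Measure.map_apply (hmeas_h z) (measurable_prodMk_left hs)]
    rfl
  have hae : ∀ᵐ z ∂(P.map Z), κ z = condDistrib X Z P z :=
    (condDistrib_ae_eq_of_measure_eq_compProd_of_measurable hZ hXmeas hkey).mono fun _ hz => hz.symm
  have haeω : ∀ᵐ ω ∂P, κ (Z ω) = condDistrib X Z P (Z ω) :=
    ae_of_ae_map hZ.aemeasurable hae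
  -- the main a.e. identity
  have hVeq : V =ᵐ[P] fun ω => Fη (η ω) := by
    filter_upwards [haeω] with ω hω
    rw [hV]
    simp only
    rw [← hω, hκapp, hX]
    simp only
    rw [Measure.map_apply (hmeas_h (Z ω)) measurableSet_Iic]
    have hset : (h (Z ω)) ⁻¹' (Iic (h (Z ω) (η ω))) = Iic (η ω) := by
      ext e
      simp [(hmono (Z ω)).le_iff_le]
    rw [hset, Measure.map_apply hη measurableSet_Iic, hF]
    rfl
  -- Fη is the cdf of P.map η
  have hcdf : Fη = cdf (P.map η) := by
    funext t
    rw [cdf_eq_real, measureReal_def, hF, Measure.map_apply hη measurableSet_Iic]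
    rfl
  have hFnonneg : ∀ x, 0 ≤ Fη x := fun x => by rw [hF]; exact ENNReal.toReal_nonneg
  have hFle1 : ∀ x, Fη x ≤ 1 := fun x => by rw [hcdf]; exact cdf_le_one _ _
  have hFpos : ∀ x, 0 < Fη x := fun x => lt_of_le_of_lt (hFnonneg (x - 1)) (hFmono (by linarith))
  have hFlt1 : ∀ x, Fη x < 1 := fun x => lt_of_lt_of_le (hFmono (lt_add_one x)) (hFle1 (x + 1))
  -- uniformity
  have hFηmeas : Measurable (fun ω => Fη (η ω)) := hFcont.measurable.comp hη
  have hmap : P.map (fun ω => Fη (η ω)) = volume.restrict (Set.Icc (0:ℝ) 1) := by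
    have : IsProbabilityMeasure (P.map (fun ω => Fη (η ω))) :=
      Measure.isProbabilityMeasure_map hFηmeas.aemeasurable
    refine Measure.ext_of_Iic _ _ (fun t => ?_)
    rw [Measure.map_apply hFηmeas measurableSet_Iic,
      Measure.restrict_apply measurableSet_Iic]
    rcases le_or_gt t 0 with ht | ht
    · have h1 : (fun ω => Fη (η ω)) ⁻¹' Iic t = ∅ := by
        ext ω; simp only [mem_preimage, mem_Iic, mem_empty_iff_false, iff_false, not_le]
        exact lt_of_le_of_lt ht (hFpos _)
      rw [h1, measure_empty]
      refine (measure_mono_null (fun x hx => ?_) (show volume (Icc (0:ℝ) t) = 0 by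
        rw [Real.volume_Icc]; simp [ht])).symm
      exact ⟨hx.2.1, hx.1⟩
    rcases le_or_gt 1 t with ht1 | ht1
    · have h1 : (fun ω => Fη (η ω)) ⁻¹' Iic t = Set.univ := by
        ext ω; simp only [mem_preimage, mem_Iic, mem_univ, iff_true]
        exact le_trans (hFlt1 _).le ht1
      have h2 : Iic t ∩ Icc (0:ℝ) 1 = Icc (0:ℝ) 1 := by
        refine inter_eq_self_of_subset_right (fun x hx => le_trans hx.2 ht1)
      rw [h1, h2, measure_univ, Real.volume_Icc]
      norm_num
    -- 0 < t < 1
    · obtain ⟨a, ha⟩ : ∃ a, Fη a < t := by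
        have := (hcdf ▸ tendsto_cdf_atBot (μ := P.map η)).eventually_lt_const ht
        exact this.exists
      obtain ⟨b, hb⟩ : ∃ b, t < Fη b := by
        have := (hcdf ▸ tendsto_cdf_atTop (μ := P.map η)).eventually_const_lt ht1
        exact this.exists
      have hab : a ≤ b := (hFmono.lt_iff_lt.mp (ha.trans hb)).le
      obtain ⟨x₀, _, hx₀⟩ : ∃ x₀ ∈ Icc a b, Fη x₀ = t :=
        intermediate_value_Icc hab hFcont.continuousOn ⟨ha.le, hb.le⟩
      have h1 : (fun ω => Fη (η ω)) ⁻¹' Iic t = η ⁻¹' Iic x₀ := by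
        ext ω
        simp only [mem_preimage, mem_Iic, ← hx₀]
        exact hFmono.le_iff_le
      have h2 : P (η ⁻¹' Iic x₀) = ENNReal.ofReal t := by
        have h3 : Fη x₀ = (P (η ⁻¹' Iic x₀)).toReal := by rw [hF]; rfl
        rw [← hx₀, h3, ENNReal.ofReal_toReal (measure_ne_top _ _)]
      have h4 : Iic t ∩ Icc (0:ℝ) 1 = Icc (0:ℝ) t := by
        ext x
        constructor
        · rintro ⟨hx1, hx2, _⟩; exact ⟨hx2, hx1⟩
        · rintro ⟨hx1, hx2⟩; exact ⟨hx2, hx1, hx2.trans ht1.le⟩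
      rw [h1, h2, h4, Real.volume_Icc]
      norm_num
  have hVZ : IndepFun V Z P := by
    have hind : IndepFun (fun ω => Fη (η ω)) Z P := by
      have := (hindep.symm).comp hFcont.measurable (measurable_id (α := ℝ))
      exact this
    exact hind.congr hVeq.symm (Filter.EventuallyEq.refl _ _)
  exact ⟨hVeq, by rw [Measure.map_congr hVeq, hmap], hVZ⟩
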